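/- If μ = (a_1, a_2, ..., a_k) with k ≥ 2 is a unique-path partition of n, then μ* = (a_2, ..., a_k) is a unique-path partition of n - a_1. -/

import Mathlib

/-- The beta-set (set of first-column hook lengths) of a partition given as a
weakly decreasing list of parts: the `i`-th part `a` contributes `a + (ℓ - 1 - i)`. -/
def betaSet (l : List ℕ) : Finset ℕ :=
  (l.mapIdx (fun i a => a + (l.length - 1 - i))).toFinset

/-- The leg length of the `a`-hook removed from the partition with beta-set `X`
by replacing the beta-number `x` with `x - a`: the number of beta-numbers
strictly between `x - a` and `x`. -/
def legLen (X : Finset ℕ) (a x : ℕ) : ℕ :=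
  (X.filter (fun y => x - a < y ∧ y < x)).card

/-- For a partition with beta-set `X` and a list `l = [a₁,…,a_k]`, the multiset of
the sums of leg lengths of the hooks removed along all `l`-paths of `X`, i.e. along
all ways of successively removing an `a₁`-hook, an `a₂`-hook, … ending at the
empty partition.  Removing an `a`-hook from a partition with beta-set `X`
corresponds to replacing some `x ∈ X` with `x - a ∉ X` (where `a ≤ x`). -/
def legSums : Finset ℕ → List ℕ → Multiset ℕ
  | X, [] => if X = Finset.range X.card then {0} else 0
  | X, a :: r =>
      (X.filter (fun x => a ≤ x ∧ x - a ∉ X)).val.bind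
        (fun x => (legSums (insert (x - a) (X.erase x)) r).map (fun L => legLen X a x + L))

/-- The number of `l`-paths in the partition with beta-set `X`:
the number of ways to successively remove hooks of lengths `a₁, a₂, …`
(for `l = [a₁,…,a_k]`) ending at the empty partition. -/
def numPaths (X : Finset ℕ) (l : List ℕ) : ℕ := (legSums X l).card

/-- Murnaghan–Nakayama evaluation: for partitions `lam`, `mu` given as weakly
decreasing lists, this is `Σ_paths (-1)^(sum of leg lengths)`, which by the
Murnaghan–Nakayama formula equals the value `χ^lam(mu)` of the irreducible
character of the symmetric group indexed by `lam` on the class of cycle type `mu`. -/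
def charList (lam mu : List ℕ) : ℤ :=
  ((legSums (betaSet lam) mu).map (fun L => (-1 : ℤ) ^ L)).sum

/-- The parts of a partition as a weakly decreasing list. -/
def sortedParts {n : ℕ} (mu : n.Partition) : List ℕ :=
  (mu.parts.sort (· ≤ ·)).reverse

/-- The value `χ^lam(mu)` of the irreducible character of `S_n` indexed by the
partition `lam` on the conjugacy class of cycle type `mu`, computed by the
Murnaghan–Nakayama formula. -/
def charValue {n : ℕ} (lam mu : n.Partition) : ℤ :=
  charList (sortedParts lam) (sortedParts mu)

lemma betaSet_cons (c : ℕ) (t : List ℕ) :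
    betaSet (c :: t) = insert (c + t.length) (betaSet t) := by
  unfold betaSet
  have h : List.mapIdx (fun i a => a + ((c :: t).length - 1 - i)) (c :: t)
      = (c + t.length) :: List.mapIdx (fun i a => a + (t.length - 1 - i)) t := by
    rw [List.mapIdx_cons]
    simp only [List.length_cons]
    congr 1
    simp [Nat.sub_sub, Nat.add_comm]
  rw [h, List.toFinset_cons]

lemma mem_betaSet_lt (b : ℕ) (t : List ℕ) (hbt : ∀ y ∈ t, y ≤ b) :
    ∀ z ∈ betaSet t, z < b + t.length := by
  intro z hz
  unfold betaSet at hz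
  rw [List.mem_toFinset, List.mem_iff_getElem] at hz
  obtain ⟨i, hi, hz⟩ := hz
  rw [List.getElem_mapIdx] at hz
  have hlen : i < t.length := by simpa using hi
  have := hbt t[i] (List.getElem_mem _)
  omega

lemma numPaths_step (X : Finset ℕ) (a : ℕ) (r : List ℕ) (x : ℕ)
    (hx : x ∈ X) (hax : a ≤ x) (hout : x - a ∉ X) :
    numPaths (insert (x - a) (X.erase x)) r ≤ numPaths X (a :: r) := by
  have hmem : x ∈ (X.filter (fun x => a ≤ x ∧ x - a ∉ X)).val := by
    simp [Finset.mem_filter, hx, hax, hout]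
  unfold numPaths
  rw [legSums, Multiset.card_bind]
  refine Multiset.single_le_sum (fun _ _ => Nat.zero_le _) _ ?_
  rw [Multiset.mem_map]
  exact ⟨x, hmem, by simp⟩

lemma sortedParts_sum {m : ℕ} (p : m.Partition) : (sortedParts p).sum = m := by
  unfold sortedParts
  rw [List.sum_reverse, ← Multiset.sum_coe, Multiset.sort_eq, p.parts_sum]

lemma mem_sortedParts {m : ℕ} (p : m.Partition) {y : ℕ} :
    y ∈ sortedParts p ↔ y ∈ p.parts := by
  unfold sortedParts
  rw [List.mem_reverse, Multiset.mem_sort]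

lemma sortedParts_sorted {m : ℕ} (p : m.Partition) :
    (sortedParts p).Pairwise (fun x y => y ≤ x) := by
  unfold sortedParts
  exact List.pairwise_reverse.mpr (Multiset.pairwise_sort _ _)

/-- If `μ = (a₁, a₂, …, a_k)` with `k ≥ 2` is a unique-path partition of `n`,
then `μ* = (a₂, …, a_k)` is a unique-path partition of `n - a₁`. -/
theorem unique_path_tail (n : ℕ) (μ : n.Partition) (a : ℕ) (r : List ℕ)
    (hr : r ≠ []) (hμ : sortedParts μ = a :: r)
    (hup : ∀ lam : n.Partition, numPaths (betaSet (sortedParts lam)) (a :: r) ≤ 1)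
    (lam : (n - a).Partition) :
    numPaths (betaSet (sortedParts lam)) r ≤ 1 := by
  have hsum_mu : a + r.sum = n := by
    have := sortedParts_sum μ; rw [hμ, List.sum_cons] at this; exact this
  have ha : 0 < a :=
    μ.parts_pos ((mem_sortedParts μ).mp (hμ ▸ (List.mem_cons_self (a := a) (l := r))))
  have hr0 : 0 < r.sum := by
    obtain ⟨y, t', rfl⟩ := List.exists_cons_of_ne_nil hr
    have hy : 0 < y := μ.parts_pos ((mem_sortedParts μ).mp
      (hμ ▸ List.mem_cons_of_mem a (List.mem_cons_self (a := y) (l := t'))))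
    rw [List.sum_cons]; omega
  -- lam is nonempty
  have hne : sortedParts lam ≠ [] := by
    intro h
    have := sortedParts_sum lam
    rw [h] at this
    simp at this
    omega
  obtain ⟨b, t, h⟩ := List.exists_cons_of_ne_nil hne
  have hsl := sortedParts_sorted lam
  rw [h, List.pairwise_cons] at hsl
  have hbt : ∀ y ∈ t, y ≤ b := hsl.1
  have hsum' : b + t.sum = n - a := by
    have := sortedParts_sum lam; rw [h, List.sum_cons] at this; exact this
  -- build Lam
  have hposLam : ∀ {i : ℕ}, i ∈ (↑((b + a) :: t) : Multiset ℕ) → 0 < i := by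
    intro i hi
    rw [Multiset.mem_coe, List.mem_cons] at hi
    rcases hi with rfl | hi
    · omega
    · exact lam.parts_pos ((mem_sortedParts lam).mp (h ▸ List.mem_cons_of_mem b hi))
  have hsumLam : (↑((b + a) :: t) : Multiset ℕ).sum = n := by
    rw [Multiset.sum_coe, List.sum_cons]; omega
  let Lam : n.Partition := ⟨↑((b + a) :: t), hposLam, hsumLam⟩
  have hSP : sortedParts Lam = (b + a) :: t := by
    have hsorted2 : ((b + a) :: t).Pairwise (fun x y => y ≤ x) :=
      List.pairwise_cons.mpr ⟨fun y hy => le_trans (hbt y hy) (Nat.le_add_right b a), hsl.2⟩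
    have hs : Lam.parts.sort (· ≤ ·) = ((b + a) :: t).reverse := by
      refine List.Perm.eq_of_pairwise' (Multiset.pairwise_sort _ _)
        (List.pairwise_reverse.mpr hsorted2) ?_
      rw [← Multiset.coe_eq_coe, Multiset.sort_eq, Multiset.coe_reverse]
    unfold sortedParts
    rw [hs, List.reverse_reverse]
  -- relate beta sets
  have hb := mem_betaSet_lt b t hbt
  have hX : betaSet (sortedParts Lam) = insert (b + a + t.length) (betaSet t) := by
    rw [hSP, betaSet_cons]
  have hxS : b + a + t.length ∉ betaSet t := fun hc => by have := hb _ hc; omega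
  have h1 : b + a + t.length ∈ betaSet (sortedParts Lam) := by
    rw [hX]; exact Finset.mem_insert_self _ _
  have h2 : a ≤ b + a + t.length := by omega
  have h3 : b + a + t.length - a ∉ betaSet (sortedParts Lam) := by
    rw [hX]
    have he : b + a + t.length - a = b + t.length := by omega
    rw [he]
    intro hc
    rcases Finset.mem_insert.mp hc with h' | h'
    · omega
    · exact absurd (hb _ h') (by omega)
  have key := numPaths_step _ a r _ h1 h2 h3
  have heq : insert (b + a + t.length - a) ((betaSet (sortedParts Lam)).erase (b + a + t.length))
      = insert (b + t.length) (betaSet t) := by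
    rw [hX, Finset.erase_insert hxS]
    congr 1
    omega
  rw [heq] at key
  rw [h, betaSet_cons]
  exact le_trans key (hup Lam)
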